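/- Let G = (V, E) be a directed graph with V = {1, ..., K}, and let p be a probability distribution over V with p_i > 0 for all i. Then ∑_{i=1}^{K} p_i / (p_i + ∑_{j ∈ N_in(i)} p_j) ≤ mas(G), where mas(G) is the maximum size of a vertex subset inducing an acyclic subgraph of G. -/

import Mathlib

/-- `V'` induces an acyclic subgraph of `E`: there is no directed cycle
(ignoring self-loops) among the vertices of `V'`. -/
def InducesAcyclic {V : Type*} (E : V → V → Prop) (V' : Finset V) : Prop :=
  ∀ a : V, ¬ Relation.TransGen (fun x y => x ∈ V' ∧ y ∈ V' ∧ x ≠ y ∧ E x y) a a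

/-- `mas G`: the maximum size of a vertex subset inducing an acyclic subgraph of `G`. -/
noncomputable def mas (V : Type*) [Fintype V] (E : V → V → Prop) : ℕ :=
  sSup {n | ∃ V' : Finset V, InducesAcyclic E V' ∧ V'.card = n}

namespace SumRatioMasAux

variable {K : ℕ} (E : Fin K → Fin K → Prop) [DecidableRel E] (p : Fin K → ℝ)

/-- In-neighborhood (excluding self-loops). -/
def Nin (i : Fin K) : Finset (Fin K) := Finset.univ.filter (fun j => E j i ∧ j ≠ i)

lemma not_mem_Nin (i : Fin K) : i ∉ Nin E i := by simp [Nin]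

/-- The ratio `p i / (p i + p(N_in(i)))`. -/
noncomputable def q (i : Fin K) : ℝ := p i / (p i + ∑ j ∈ Nin E i, p j)

/-- `Phi S = ∑_{i ∈ S, N_in(i) ⊆ S} q i`. -/
noncomputable def Phi (S : Finset (Fin K)) : ℝ :=
  ∑ i ∈ S, if Nin E i ⊆ S then q E p i else 0

lemma card_le_mas {V' : Finset (Fin K)} (h : InducesAcyclic E V') :
    V'.card ≤ mas (Fin K) E := by
  apply le_csSup
  · refine ⟨K, ?_⟩
    rintro n ⟨W, _, rfl⟩
    calc W.card ≤ (Finset.univ : Finset (Fin K)).card := W.card_le_univ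
      _ = K := by simp
  · exact ⟨V', h, rfl⟩

lemma acyclic_of_ord (l : List (Fin K))
    (hord : ∀ a ∈ l, ∀ b ∈ Nin E a, b ∈ l → l.idxOf a < l.idxOf b) :
    InducesAcyclic E l.toFinset := by
  intro a hcyc
  have key : ∀ x y, Relation.TransGen
      (fun x y => x ∈ l.toFinset ∧ y ∈ l.toFinset ∧ x ≠ y ∧ E x y) x y →
      l.idxOf y < l.idxOf x := by
    intro x y h
    induction h with
    | single h =>
      obtain ⟨hx, hy, hne, hE⟩ := h
      exact hord _ (List.mem_toFinset.mp hy) _ (by simp [Nin, hE, hne])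
        (List.mem_toFinset.mp hx)
    | tail h₁ h₂ ih =>
      obtain ⟨hx, hy, hne, hE⟩ := h₂
      exact lt_trans (hord _ (List.mem_toFinset.mp hy) _ (by simp [Nin, hE, hne])
        (List.mem_toFinset.mp hx)) ih
  exact lt_irrefl _ (key a a hcyc)

lemma len_le_mas (l : List (Fin K)) (hnd : l.Nodup)
    (hord : ∀ a ∈ l, ∀ b ∈ Nin E a, b ∈ l → l.idxOf a < l.idxOf b) :
    (l.length : ℝ) ≤ (mas (Fin K) E : ℝ) := by
  have h := card_le_mas E (acyclic_of_ord E l hord)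
  rw [List.toFinset_card_of_nodup hnd] at h
  exact_mod_cast h

lemma key_identity (hp : ∀ i, 0 < p i) (S : Finset (Fin K)) :
    (∑ u ∈ S, p u) * Phi E p S
      = ∑ v ∈ S, p v * ((if Nin E v ⊆ S then (1:ℝ) else 0) + Phi E p (S.erase v)) := by
  have hB : ∑ v ∈ S, p v * Phi E p (S.erase v)
      = ∑ i ∈ S, (if Nin E i ⊆ S then
          q E p i * ((∑ u ∈ S, p u) - p i - ∑ j ∈ Nin E i, p j) else 0) := by
    have h1 : ∑ v ∈ S, p v * Phi E p (S.erase v)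
        = ∑ v ∈ S, ∑ i ∈ S, (if i ≠ v then
            p v * (if Nin E i ⊆ S.erase v then q E p i else 0) else 0) := by
      refine Finset.sum_congr rfl fun v hv => ?_
      rw [Phi, Finset.mul_sum, ← Finset.filter_ne' S v, Finset.sum_filter]
    rw [h1, Finset.sum_comm]
    refine Finset.sum_congr rfl fun i hi => ?_
    by_cases hNS : Nin E i ⊆ S
    · have h2 : ∀ v, (if i ≠ v then
          p v * (if Nin E i ⊆ S.erase v then q E p i else 0) else 0)
          = (if i ≠ v ∧ v ∉ Nin E i then p v * q E p i else 0) := by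
        intro v
        by_cases hiv : i ≠ v
        · by_cases hvN : v ∉ Nin E i
          · simp [hiv, hvN, Finset.subset_erase, hNS]
          · simp [hiv, hvN, Finset.subset_erase]
        · simp [hiv]
      rw [if_pos hNS]
      calc ∑ v ∈ S, (if i ≠ v then
            p v * (if Nin E i ⊆ S.erase v then q E p i else 0) else 0)
          = ∑ v ∈ S, (if i ≠ v ∧ v ∉ Nin E i then p v * q E p i else 0) :=
            Finset.sum_congr rfl fun v _ => h2 v
        _ = ∑ v ∈ S.filter (fun v => i ≠ v ∧ v ∉ Nin E i), p v * q E p i := by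
            rw [Finset.sum_filter]
        _ = (∑ v ∈ S.erase i \ Nin E i, p v) * q E p i := by
            rw [← Finset.sum_mul]
            congr 1
            apply Finset.sum_congr _ fun _ _ => rfl
            ext v
            simp only [Finset.mem_filter, Finset.mem_sdiff, Finset.mem_erase, ne_eq]
            tauto
        _ = q E p i * ((∑ u ∈ S, p u) - p i - ∑ j ∈ Nin E i, p j) := by
            have hsub : Nin E i ⊆ S.erase i :=
              Finset.subset_erase.mpr ⟨hNS, not_mem_Nin E i⟩
            rw [Finset.sum_sdiff_eq_sub hsub,
              Finset.sum_erase_eq_sub hi, mul_comm]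
    · rw [if_neg hNS]
      refine Finset.sum_eq_zero fun v hv => ?_
      by_cases hiv : i ≠ v
      · have : ¬ Nin E i ⊆ S.erase v := fun h =>
          hNS (h.trans (Finset.erase_subset _ _))
        simp [hiv, this]
      · simp [hiv]
  have hA : ∑ v ∈ S, p v * (if Nin E v ⊆ S then (1:ℝ) else 0)
      = ∑ i ∈ S, (if Nin E i ⊆ S then p i else 0) := by
    refine Finset.sum_congr rfl fun v _ => ?_
    by_cases h : Nin E v ⊆ S <;> simp [h]
  calc (∑ u ∈ S, p u) * Phi E p S
      = ∑ i ∈ S, (∑ u ∈ S, p u) * (if Nin E i ⊆ S then q E p i else 0) := by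
        rw [Phi, Finset.mul_sum]
    _ = ∑ i ∈ S, ((if Nin E i ⊆ S then p i else 0)
          + (if Nin E i ⊆ S then
              q E p i * ((∑ u ∈ S, p u) - p i - ∑ j ∈ Nin E i, p j) else 0)) := by
        refine Finset.sum_congr rfl fun i _ => ?_
        by_cases h : Nin E i ⊆ S
        · have hden : p i + ∑ j ∈ Nin E i, p j ≠ 0 := by
            have : (0:ℝ) ≤ ∑ j ∈ Nin E i, p j :=
              Finset.sum_nonneg fun j _ => (hp j).le
            nlinarith [hp i]
          have hq : q E p i * (p i + ∑ j ∈ Nin E i, p j) = p i := by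
            rw [q, div_mul_cancel₀ _ hden]
          simp only [if_pos h]
          nlinarith [hq]
        · simp [h]
    _ = ∑ v ∈ S, p v * ((if Nin E v ⊆ S then (1:ℝ) else 0) + Phi E p (S.erase v)) := by
        rw [Finset.sum_add_distrib, ← hA, ← hB, ← Finset.sum_add_distrib]
        refine Finset.sum_congr rfl fun v _ => ?_
        ring

lemma main (hp : ∀ i, 0 < p i) :
    ∀ n (S : Finset (Fin K)), S.card ≤ n → ∀ l : List (Fin K), l.Nodup →
      (∀ a ∈ l, a ∉ S) →
      (∀ a ∈ l, ∀ b ∈ Nin E a, b ∈ l → l.idxOf a < l.idxOf b) →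
      (l.length : ℝ) + Phi E p S ≤ (mas (Fin K) E : ℝ) := by
  intro n
  induction n with
  | zero =>
    intro S hcard l hnd hdisj hord
    have hS : S = ∅ := Finset.card_eq_zero.mp (Nat.le_zero.mp hcard)
    subst hS
    have hlen := len_le_mas E l hnd hord
    rw [show Phi E p (∅ : Finset (Fin K)) = 0 from by simp [Phi], add_zero]
    exact hlen
  | succ n ih =>
    intro S hcard l hnd hdisj hord
    rcases S.eq_empty_or_nonempty with rfl | hS
    · have hlen := len_le_mas E l hnd hord
      rw [show Phi E p (∅ : Finset (Fin K)) = 0 from by simp [Phi], add_zero]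
      exact hlen
    · have hps : 0 < ∑ u ∈ S, p u := Finset.sum_pos (fun i _ => hp i) hS
      have hvnl : ∀ v ∈ S, v ∉ l := fun v hv hvl => hdisj v hvl hv
      have hterm : ∀ v ∈ S,
          ((if Nin E v ⊆ S then (1:ℝ) else 0) + Phi E p (S.erase v))
            ≤ (mas (Fin K) E : ℝ) - l.length := by
        intro v hv
        have hcard' : (S.erase v).card ≤ n := by
          rw [Finset.card_erase_of_mem hv]; omega
        by_cases hNv : Nin E v ⊆ S
        · -- use list l ++ [v]
          have hvl : v ∉ l := hvnl v hv
          have hnd' : (l ++ [v]).Nodup := by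
            simp [List.nodup_append, hnd, hvl]
            exact fun a ha h => hvl (h ▸ ha)
          have hdisj' : ∀ a ∈ l ++ [v], a ∉ S.erase v := by
            intro a ha
            rcases List.mem_append.mp ha with h | h
            · exact fun hmem => hdisj a h (Finset.mem_of_mem_erase hmem)
            · simp at h; subst h; exact Finset.notMem_erase _ _
          have hord' : ∀ a ∈ l ++ [v], ∀ b ∈ Nin E a, b ∈ l ++ [v] →
              (l ++ [v]).idxOf a < (l ++ [v]).idxOf b := by
            intro a ha b hb hbl
            rcases List.mem_append.mp ha with hal | hav
            · rcases List.mem_append.mp hbl with hblm | hbv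
              · rw [List.idxOf_append_of_mem hal, List.idxOf_append_of_mem hblm]
                exact hord a hal b hb hblm
              · simp at hbv; subst hbv
                rw [List.idxOf_append_of_mem hal, List.idxOf_append_of_notMem hvl]
                have : l.idxOf a < l.length := List.idxOf_lt_length_iff.mpr hal
                simp; omega
            · simp at hav; subst hav
              have hbS : b ∈ S := hNv hb
              rcases List.mem_append.mp hbl with hblm | hbv
              · exact absurd hbS (hdisj b hblm)
              · simp at hbv; subst hbv
                exact absurd hb (not_mem_Nin E b)
          have h := ih (S.erase v) hcard' (l ++ [v]) hnd' hdisj' hord'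
          rw [if_pos hNv]
          simp only [List.length_append, List.length_singleton] at h
          push_cast at h
          linarith
        · have hdisj' : ∀ a ∈ l, a ∉ S.erase v :=
            fun a ha hmem => hdisj a ha (Finset.mem_of_mem_erase hmem)
          have h := ih (S.erase v) hcard' l hnd hdisj' hord
          rw [if_neg hNv]
          linarith
      have hPhi : Phi E p S = ∑ v ∈ S, (p v / (∑ u ∈ S, p u)) *
          ((if Nin E v ⊆ S then (1:ℝ) else 0) + Phi E p (S.erase v)) := by
        have h := key_identity E p hp S
        have h2 : ∑ v ∈ S, (p v / (∑ u ∈ S, p u)) *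
            ((if Nin E v ⊆ S then (1:ℝ) else 0) + Phi E p (S.erase v))
            = (∑ v ∈ S, p v *
              ((if Nin E v ⊆ S then (1:ℝ) else 0) + Phi E p (S.erase v)))
              / (∑ u ∈ S, p u) := by
          rw [Finset.sum_div]
          exact Finset.sum_congr rfl fun v _ => by ring
        rw [h2, ← h, mul_div_cancel_left₀ _ hps.ne']
      have hwsum : ∑ v ∈ S, p v / (∑ u ∈ S, p u) = 1 := by
        rw [← Finset.sum_div, div_self hps.ne']
      have hbound : Phi E p S ≤ (mas (Fin K) E : ℝ) - l.length := by
        rw [hPhi]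
        calc ∑ v ∈ S, (p v / (∑ u ∈ S, p u)) *
              ((if Nin E v ⊆ S then (1:ℝ) else 0) + Phi E p (S.erase v))
            ≤ ∑ v ∈ S, (p v / (∑ u ∈ S, p u)) * ((mas (Fin K) E : ℝ) - l.length) := by
              refine Finset.sum_le_sum fun v hv => ?_
              exact mul_le_mul_of_nonneg_left (hterm v hv)
                (div_nonneg (hp v).le hps.le)
          _ = (mas (Fin K) E : ℝ) - l.length := by
              rw [← Finset.sum_mul, hwsum, one_mul]
      linarith

end SumRatioMasAux

/-- For any directed graph on `{1, …, K}` and any probability distribution `p` with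
`p i > 0`, `∑_i p_i / (p_i + ∑_{j ∈ N_in(i)} p_j) ≤ mas(G)`. -/
theorem sum_ratio_le_mas (K : ℕ) (E : Fin K → Fin K → Prop) [DecidableRel E]
    (p : Fin K → ℝ) (hp : ∀ i, 0 < p i) (hsum : ∑ i, p i = 1) :
    ∑ i, p i / (p i + ∑ j ∈ Finset.univ.filter (fun j => E j i ∧ j ≠ i), p j) ≤
      (mas (Fin K) E : ℝ) := by
  have h := SumRatioMasAux.main E p hp K Finset.univ (by simp) [] (by simp)
    (by simp) (by simp)
  simpa [SumRatioMasAux.Phi, SumRatioMasAux.q, SumRatioMasAux.Nin] using h
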